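/- Every well-nested Dyck picture is neutralizable: DW₁ ⊆ DN₁. Moreover the inclusion is strict, witnessed by the 2×4 picture with rows a a b b and c c d d, which is in DN₁ but not in DW₁. -/

import Mathlib

/-- The alphabet Δ₁ = {a, b, c, d}. -/
inductive Del : Type
  | a | b | c | d
deriving DecidableEq

/-- Row cancellation: pairs [a,b] and [c,d]. -/
def rowStep (w w' : List Del) : Prop :=
  ∃ (u v : List Del),
    (w = u ++ [Del.a, Del.b] ++ v ∨ w = u ++ [Del.c, Del.d] ++ v) ∧ w' = u ++ v

/-- The row Dyck language D^Row. -/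
def DRow (w : List Del) : Prop := Relation.ReflTransGen rowStep w []

/-- Column cancellation: pairs [a,c] and [b,d]. -/
def colStep (w w' : List Del) : Prop :=
  ∃ (u v : List Del),
    (w = u ++ [Del.a, Del.c] ++ v ∨ w = u ++ [Del.b, Del.d] ++ v) ∧ w' = u ++ v

/-- The column Dyck language D^Col. -/
def DCol (w : List Del) : Prop := Relation.ReflTransGen colStep w []

/-- Row i (of length n) of a picture. -/
def row (p : ℕ → ℕ → Del) (n i : ℕ) : List Del := (List.range n).map (p i)

/-- Column j (of length m) of a picture. -/
def col (p : ℕ → ℕ → Del) (m j : ℕ) : List Del :=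
  (List.range m).map (fun i => p i j)

/-- The Dyck crossword language DC₁: nonempty pictures all of whose rows
are in D^Row and all of whose columns are in D^Col. -/
def DC (m n : ℕ) (p : ℕ → ℕ → Del) : Prop :=
  1 ≤ m ∧ 1 ≤ n ∧ (∀ i < m, DRow (row p n i)) ∧ (∀ j < n, DCol (col p m j))

/-- Dyck words over the single matching pair [a,b] (used for the top row of
an accretion frame). -/
def abStep (w w' : List Del) : Prop :=
  ∃ (u v : List Del), w = u ++ [Del.a, Del.b] ++ v ∧ w' = u ++ v

def DyckAB (w : List Del) : Prop := Relation.ReflTransGen abStep w []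

/-- Dyck words over the single matching pair [a,c] (used for the left column
of an accretion frame). -/
def acStep (w w' : List Del) : Prop :=
  ∃ (u v : List Del), w = u ++ [Del.a, Del.c] ++ v ∧ w' = u ++ v

def DyckAC (w : List Del) : Prop := Relation.ReflTransGen acStep w []

/-- The map h_r : a ↦ c, b ↦ d. -/
def hr : Del → Del
  | Del.a => Del.c
  | Del.b => Del.d
  | x => x

/-- The map h_c : a ↦ b, c ↦ d. -/
def hc : Del → Del
  | Del.a => Del.b
  | Del.c => Del.d
  | x => x

def inDom (d : ℕ × ℕ × ℕ × ℕ) (r s : ℕ) : Prop :=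
  d.1 ≤ r ∧ r ≤ d.2.2.1 ∧ d.2.1 ≤ s ∧ s ≤ d.2.2.2

/-- The well-nested Dyck language DW₁: the smallest picture language
containing the empty picture and closed under nesting accretion and the
Simplot closure (tessellation). -/
inductive DW : ℕ → ℕ → (ℕ → ℕ → Del) → Prop
  | empty (p : ℕ → ℕ → Del) : DW 0 0 p
  | accrete (m n : ℕ) (p q : ℕ → ℕ → Del) (wr wc : List Del) :
      DW m n p → DyckAB wr → DyckAC wc → wr.length = n → wc.length = m →
      q 0 0 = Del.a → q 0 (n + 1) = Del.b →
      q (m + 1) 0 = Del.c → q (m + 1) (n + 1) = Del.d →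
      (∀ s < n, q 0 (s + 1) = wr.getD s Del.a) →
      (∀ s < n, q (m + 1) (s + 1) = hr (wr.getD s Del.a)) →
      (∀ r < m, q (r + 1) 0 = wc.getD r Del.a) →
      (∀ r < m, q (r + 1) (n + 1) = hc (wc.getD r Del.a)) →
      (∀ r < m, ∀ s < n, q (r + 1) (s + 1) = p r s) →
      DW (m + 2) (n + 2) q
  | simplot (m n : ℕ) (p : ℕ → ℕ → Del) (ds : Set (ℕ × ℕ × ℕ × ℕ)) :
      1 ≤ m → 1 ≤ n →
      (∀ d ∈ ds, d.1 ≤ d.2.2.1 ∧ d.2.2.1 < m ∧ d.2.1 ≤ d.2.2.2 ∧ d.2.2.2 < n) →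
      (∀ r < m, ∀ s < n, ∃! d, d ∈ ds ∧ inDom d r s) →
      (∀ d ∈ ds, DW (d.2.2.1 - d.1 + 1) (d.2.2.2 - d.2.1 + 1)
        (fun r s => p (d.1 + r) (d.2.1 + s))) →
      DW m n p

/-- The alphabet Δ₁ ∪ {N}. -/
inductive DelN : Type
  | a | b | c | d | N
deriving DecidableEq

def embed : Del → DelN
  | Del.a => DelN.a
  | Del.b => DelN.b
  | Del.c => DelN.c
  | Del.d => DelN.d

/-- One neutralization step inside an m×n picture: a subpicture of size at
least 2×2 whose four corners are a, b, c, d and whose remaining cells are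
all N is replaced by an all-N subpicture. -/
def nstep (m n : ℕ) (q q' : ℕ → ℕ → DelN) : Prop :=
  ∃ (i j i' j' : ℕ), i < i' ∧ j < j' ∧ i' < m ∧ j' < n ∧
    q i j = DelN.a ∧ q i j' = DelN.b ∧ q i' j = DelN.c ∧ q i' j' = DelN.d ∧
    (∀ r s, i ≤ r → r ≤ i' → j ≤ s → s ≤ j' →
      ¬((r = i ∨ r = i') ∧ (s = j ∨ s = j')) → q r s = DelN.N) ∧
    (∀ r s, (i ≤ r ∧ r ≤ i' ∧ j ≤ s ∧ s ≤ j') → q' r s = DelN.N) ∧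
    (∀ r s, ¬(i ≤ r ∧ r ≤ i' ∧ j ≤ s ∧ s ≤ j') → q' r s = q r s)

/-- The neutralizable Dyck language DN₁: nonempty pictures over Δ₁ that can
be transformed into the all-N picture by neutralization steps. -/
def DN (m n : ℕ) (p : ℕ → ℕ → Del) : Prop :=
  1 ≤ m ∧ 1 ≤ n ∧
    ∃ q : ℕ → ℕ → DelN,
      Relation.ReflTransGen (nstep m n) (fun r s => embed (p r s)) q ∧
      ∀ r < m, ∀ s < n, q r s = DelN.N

/-- The 2×4 picture with rows `a a b b` and `c c d d`. -/
def pN : ℕ → ℕ → Del := fun i j =>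
  if i = 0 then (if j ≤ 1 then Del.a else Del.b)
  else (if j ≤ 1 then Del.c else Del.d)
namespace DWDN

def isNotN : DelN → Bool
  | DelN.N => false
  | _ => true

lemma isNotN_embed (x : Del) : isNotN (embed x) = true := by cases x <;> rfl

lemma eq_N_of_not_isNotN {x : DelN} (h : ¬ isNotN x = true) : x = DelN.N := by
  cases x <;> simp [isNotN] at h ⊢

def hrN : DelN → DelN
  | DelN.a => DelN.c
  | DelN.b => DelN.d
  | x => x

def hcN : DelN → DelN
  | DelN.a => DelN.b
  | DelN.c => DelN.d
  | x => x

lemma hrN_embed (x : Del) : hrN (embed x) = embed (hr x) := by cases x <;> rfl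
lemma hcN_embed (x : Del) : hcN (embed x) = embed (hc x) := by cases x <;> rfl

lemma filter_map_embed (l : List Del) : (l.map embed).filter isNotN = l.map embed := by
  induction l with
  | nil => rfl
  | cons x l ih => simp [List.filter, isNotN_embed, ih]

/-- split a filter equation along an append. -/
lemma filter_split (p : DelN → Bool) :
    ∀ (t L₁ L₂ : List DelN), t.filter p = L₁ ++ L₂ →
      ∃ s₁ s₂, t = s₁ ++ s₂ ∧ s₁.filter p = L₁ ∧ s₂.filter p = L₂ := by
  intro t
  induction t with
  | nil =>
      intro L₁ L₂ h
      simp only [List.filter_nil] at h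
      obtain ⟨h1, h2⟩ := List.append_eq_nil_iff.mp h.symm
      exact ⟨[], [], rfl, by simp [h1], by simp [h2]⟩
  | cons x t ih =>
      intro L₁ L₂ h
      by_cases hx : p x = true
      · rw [List.filter_cons_of_pos hx] at h
        cases L₁ with
        | nil =>
            exact ⟨[], x :: t, rfl, rfl, by simpa [List.filter_cons_of_pos hx] using h⟩
        | cons y L₁' =>
            simp only [List.cons_append, List.cons.injEq] at h
            obtain ⟨rfl, h2⟩ := h
            obtain ⟨s₁, s₂, rfl, hs1, hs2⟩ := ih L₁' L₂ h2
            exact ⟨x :: s₁, s₂, rfl, by simp [List.filter_cons_of_pos hx, hs1], hs2⟩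
      · rw [List.filter_cons_of_neg hx] at h
        obtain ⟨s₁, s₂, rfl, hs1, hs2⟩ := ih L₁ L₂ h
        exact ⟨x :: s₁, s₂, rfl, by simp [List.filter_cons_of_neg hx, hs1], hs2⟩

lemma filter_cons_decomp (p : DelN → Bool) :
    ∀ (t : List DelN) (x : DelN) (L : List DelN), t.filter p = x :: L →
      ∃ t₁ t₂, t = t₁ ++ x :: t₂ ∧ (∀ y ∈ t₁, p y = false) ∧ t₂.filter p = L := by
  intro t
  induction t with
  | nil => intro x L h; simp at h
  | cons z t ih =>
      intro x L h
      by_cases hz : p z = true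
      · rw [List.filter_cons_of_pos hz] at h
        obtain ⟨rfl, rfl⟩ : z = x ∧ t.filter p = L := by
          simpa using h
        exact ⟨[], t, rfl, by simp, rfl⟩
      · rw [List.filter_cons_of_neg hz] at h
        obtain ⟨t₁, t₂, rfl, h1, h2⟩ := ih x L h
        exact ⟨z :: t₁, t₂, rfl, by
          intro y hy
          rcases List.mem_cons.mp hy with rfl | hy
          · simpa using hz
          · exact h1 y hy, h2⟩

lemma split_range_map (f : ℕ → DelN) :
    ∀ (L₁ : List DelN) (n : ℕ) (L₂ : List DelN), (List.range n).map f = L₁ ++ L₂ →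
      L₁ = (List.range L₁.length).map f ∧
      L₂ = (List.range L₂.length).map (fun k => f (L₁.length + k)) ∧
      n = L₁.length + L₂.length := by
  intro L₁
  induction L₁ generalizing f with
  | nil =>
      intro n L₂ h
      simp only [List.nil_append] at h
      have hn : n = L₂.length := by
        have := congrArg List.length h; simpa using this
      subst hn
      exact ⟨rfl, by simpa using h.symm, by simp⟩
  | cons x L₁' ih =>
      intro n L₂ h
      cases n with
      | zero => simp at h
      | succ n' =>
          rw [List.range_succ_eq_map, List.map_cons, List.map_map] at h
          simp only [List.cons_append, List.cons.injEq] at h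
          obtain ⟨rfl, h2⟩ := h
          obtain ⟨e1, e2, e3⟩ := ih (fun k => f (k + 1)) n' L₂ (by
            simpa [Function.comp_def] using h2)
          refine ⟨?_, ?_, by simp [e3]; omega⟩
          · show _ = (List.range (L₁'.length + 1)).map f
            rw [List.range_succ_eq_map, List.map_cons, List.map_map]
            nth_rewrite 1 [e1]
            simp [Function.comp]
          · show L₂ = (List.range L₂.length).map (fun k => f (L₁'.length + 1 + k))
            nth_rewrite 1 [e2]
            apply List.map_congr_left
            intro k _
            congr 1
            omega

end DWDN
namespace DWDN

lemma nstep_lift (m n h w i0 j0 : ℕ) (hi : i0 + h ≤ m) (hj : j0 + w ≤ n)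
    (p p' Q : ℕ → ℕ → DelN)
    (hQ : ∀ r < h, ∀ s < w, Q (i0 + r) (j0 + s) = p r s)
    (hstep : nstep h w p p') :
    nstep m n Q (fun r s =>
      if i0 ≤ r ∧ r < i0 + h ∧ j0 ≤ s ∧ s < j0 + w then p' (r - i0) (s - j0) else Q r s) := by
  obtain ⟨i, j, i', j', hii, hjj, him, hjn, ha, hb, hc, hd, hint, hin, hout⟩ := hstep
  refine ⟨i0 + i, j0 + j, i0 + i', j0 + j', by omega, by omega, by omega, by omega,
    ?_, ?_, ?_, ?_, ?_, ?_, ?_⟩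
  · rw [hQ i (by omega) j (by omega)]; exact ha
  · rw [hQ i (by omega) j' (by omega)]; exact hb
  · rw [hQ i' (by omega) j (by omega)]; exact hc
  · rw [hQ i' (by omega) j' (by omega)]; exact hd
  · intro r s h1 h2 h3 h4 h5
    have hr : r = i0 + (r - i0) := by omega
    have hs : s = j0 + (s - j0) := by omega
    rw [hr, hs, hQ _ (by omega) _ (by omega)]
    apply hint _ _ (by omega) (by omega) (by omega) (by omega)
    omega
  · intro r s ⟨h1, h2, h3, h4⟩
    dsimp only
    rw [if_pos (by omega)]
    exact hin _ _ ⟨by omega, by omega, by omega, by omega⟩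
  · intro r s hno
    dsimp only
    by_cases hb : i0 ≤ r ∧ r < i0 + h ∧ j0 ≤ s ∧ s < j0 + w
    · rw [if_pos hb, hout _ _ (by omega)]
      have := hQ (r - i0) (by omega) (s - j0) (by omega)
      rw [show i0 + (r - i0) = r by omega, show j0 + (s - j0) = s by omega] at this
      exact this.symm
    · rw [if_neg hb]

lemma rtg_lift (m n h w i0 j0 : ℕ) (hi : i0 + h ≤ m) (hj : j0 + w ≤ n)
    {p p₂ : ℕ → ℕ → DelN} (hrun : Relation.ReflTransGen (nstep h w) p p₂) :
    ∀ Q : ℕ → ℕ → DelN, (∀ r < h, ∀ s < w, Q (i0 + r) (j0 + s) = p r s) →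
    ∃ Q', Relation.ReflTransGen (nstep m n) Q Q' ∧
      (∀ r < h, ∀ s < w, Q' (i0 + r) (j0 + s) = p₂ r s) ∧
      (∀ r s, ¬(i0 ≤ r ∧ r < i0 + h ∧ j0 ≤ s ∧ s < j0 + w) → Q' r s = Q r s) := by
  induction hrun using Relation.ReflTransGen.head_induction_on with
  | refl => intro Q hQ; exact ⟨Q, .refl, hQ, fun _ _ _ => rfl⟩
  | head hstep _ ih =>
      intro Q hQ
      rename_i pa pb _
      have hstep' := nstep_lift m n h w i0 j0 hi hj pa pb Q hQ hstep
      set Q₁ : ℕ → ℕ → DelN := fun r s =>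
        if i0 ≤ r ∧ r < i0 + h ∧ j0 ≤ s ∧ s < j0 + w then pb (r - i0) (s - j0) else Q r s with hQ₁def
      obtain ⟨Q', hrun', hon, hoff⟩ := ih Q₁ (by
        intro r hr s hs
        simp only [hQ₁def]
        rw [if_pos (by omega)]
        congr 1 <;> omega)
      refine ⟨Q', .head hstep' hrun', hon, ?_⟩
      intro r s hno
      rw [hoff r s hno, hQ₁def]
      dsimp only
      rw [if_neg (by omega)]

end DWDN
namespace DWDN

lemma mem_of_range_map {α : Type*} {g : ℕ → α} {len : ℕ} {L : List α}
    (h : L = (List.range len).map g) {k : ℕ} (hk : k < len) : g k ∈ L := by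
  subst h
  exact List.mem_map.mpr ⟨k, List.mem_range.mpr hk, rfl⟩

lemma getElem_range_map {α : Type*} {g : ℕ → α} {len : ℕ} {L : List α}
    (h : L = (List.range len).map g) {k : ℕ} (hk : k < L.length) : L[k] = g k := by
  subst h
  simp

lemma TB (m n : ℕ) : ∀ (w : List Del), DyckAB w → ∀ (q : ℕ → ℕ → DelN),
    (∀ r s, 1 ≤ r → r ≤ m → 1 ≤ s → s ≤ n → q r s = DelN.N) →
    ((List.range n).map (fun s => q 0 (s+1))).filter isNotN = w.map embed →
    (∀ s, 1 ≤ s → s ≤ n → q (m+1) s = hrN (q 0 s)) →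
    ∃ q', Relation.ReflTransGen (nstep (m+2) (n+2)) q q' ∧
      (∀ s, 1 ≤ s → s ≤ n → q' 0 s = DelN.N ∧ q' (m+1) s = DelN.N) ∧
      (∀ r s, ((r ≠ 0 ∧ r ≠ m+1) ∨ s = 0 ∨ s = n+1) → q' r s = q r s) := by
  intro w hw
  induction hw using Relation.ReflTransGen.head_induction_on with
  | refl =>
      intro q h1 h2 h3
      refine ⟨q, .refl, ?_, fun _ _ _ => rfl⟩
      intro s hs1 hs2
      have hN : q 0 s = DelN.N := by
        have hmem : q 0 s ∈ (List.range n).map (fun s => q 0 (s+1)) :=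
          List.mem_map.mpr ⟨s - 1, List.mem_range.mpr (by omega), by
            rw [show s - 1 + 1 = s by omega]⟩
        by_contra hne
        have hmem2 : q 0 s ∈ ((List.range n).map (fun s => q 0 (s+1))).filter isNotN :=
          List.mem_filter.mpr ⟨hmem, by cases hq : q 0 s <;> simp_all [isNotN]⟩
        rw [h2] at hmem2
        simp at hmem2
      exact ⟨hN, by rw [h3 s hs1 hs2, hN]; rfl⟩
  | @head w₀ w₁ hstep hrest ih =>
      intro q h1 h2 h3
      obtain ⟨u, v, hw0, hw1⟩ := hstep
      subst hw0 hw1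
      set f : ℕ → DelN := fun s => q 0 (s+1) with hf
      -- decompose the top row
      rw [show (u ++ [Del.a, Del.b] ++ v).map embed
            = u.map embed ++ (DelN.a :: (DelN.b :: v.map embed)) by
              simp
              exact ⟨rfl, rfl⟩] at h2
      obtain ⟨s₁, s₂, hts, hfs₁, hfs₂⟩ := filter_split isNotN _ _ _ h2
      obtain ⟨t₂a, rest, hs₂, hNa, hrest⟩ := filter_cons_decomp isNotN s₂ _ _ hfs₂
      obtain ⟨t₂b, t₃, hrest2, hNb, ht₃⟩ := filter_cons_decomp isNotN rest _ _ hrest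
      set t₁ : List DelN := s₁ ++ t₂a with ht₁
      have hft₁ : t₁.filter isNotN = u.map embed := by
        rw [ht₁, List.filter_append, hfs₁, List.filter_eq_nil_iff.mpr (by
          intro y hy; rw [hNa y hy]; simp), List.append_nil]
      have htdec : (List.range n).map f = t₁ ++ (DelN.a :: (t₂b ++ DelN.b :: t₃)) := by
        rw [hts, hs₂, hrest2, ht₁]; simp
      set j : ℕ := t₁.length with hj
      obtain ⟨e_t₁, e_rest, hlen⟩ := split_range_map f t₁ n _ htdec
      have hlen' : n = j + t₂b.length + 2 + t₃.length := by
        rw [hlen]; simp; omega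
      -- peel off `a`
      obtain ⟨e_a, e_rest2, -⟩ := split_range_map (fun k => f (j + k)) [DelN.a]
        (DelN.a :: (t₂b ++ DelN.b :: t₃)).length (t₂b ++ DelN.b :: t₃) (by rw [← e_rest]; rfl)
      have hfj : f j = DelN.a := by
        simp only [List.length_singleton, List.range_succ, List.range_zero, List.nil_append,
          List.map_cons, List.map_nil, List.cons.injEq, and_true] at e_a
        rw [show j = j + 0 by omega]
        exact e_a.symm
      simp only [List.length_singleton] at e_rest2
      -- peel off t₂b
      obtain ⟨e_t₂b, e_rest3, -⟩ := split_range_map (fun k => f (j + (1 + k)))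
        t₂b (t₂b ++ DelN.b :: t₃).length (DelN.b :: t₃) (by rw [← e_rest2])
      have hmid : ∀ k < t₂b.length, f (j + 1 + k) = DelN.N := by
        intro k hk
        have hmem := mem_of_range_map e_t₂b hk
        have hval := eq_N_of_not_isNotN (x := f (j + (1 + k))) (by rw [hNb _ hmem]; simp)
        rw [show j + 1 + k = j + (1 + k) by omega]
        exact hval
      -- peel off `b`
      obtain ⟨e_b, e_rest4, -⟩ := split_range_map (fun k => f (j + (1 + (t₂b.length + k))))
        [DelN.b] (DelN.b :: t₃).length t₃ (by rw [← e_rest3]; rfl)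
      set j' : ℕ := j + t₂b.length + 1 with hj'
      have hfj' : f j' = DelN.b := by
        simp only [List.length_singleton, List.range_succ, List.range_zero, List.nil_append,
          List.map_cons, List.map_nil, List.cons.injEq, and_true] at e_b
        rw [show j' = j + (1 + (t₂b.length + 0)) by omega]
        exact e_b.symm
      simp only [List.length_singleton] at e_rest4
      have e_t₃ : ∀ (k : ℕ) (hk : k < t₃.length), t₃[k] = f (j' + 1 + k) := by
        intro k hk
        rw [getElem_range_map e_rest4 hk]
        congr 1
        omega
      have hj'n : j' < n := by omega
      have htop : ∀ s, j < s → s < j' → f s = DelN.N := by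
        intro s hs1 hs2
        have := hmid (s - j - 1) (by omega)
        rwa [show j + 1 + (s - j - 1) = s by omega] at this
      -- facts as raw picture values
      have hqa : q 0 (j + 1) = DelN.a := hfj
      have hqb : q 0 (j' + 1) = DelN.b := hfj'
      have hqtop : ∀ s, j + 1 < s → s < j' + 1 → q 0 s = DelN.N := by
        intro s hs1 hs2
        have := htop (s - 1) (by omega) (by omega)
        rw [show s = s - 1 + 1 by omega]
        exact this
      have hqc : q (m+1) (j+1) = DelN.c := by
        rw [h3 _ (by omega) (by omega), hqa]; rfl
      have hqd : q (m+1) (j'+1) = DelN.d := by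
        rw [h3 _ (by omega) (by omega), hqb]; rfl
      have hqbot : ∀ s, j + 1 < s → s < j' + 1 → q (m+1) s = DelN.N := by
        intro s hs1 hs2
        rw [h3 _ (by omega) (by omega), hqtop s hs1 hs2]; rfl
      -- the neutralization step
      set q₁ : ℕ → ℕ → DelN := fun r s =>
        if r ≤ m+1 ∧ j+1 ≤ s ∧ s ≤ j'+1 then DelN.N else q r s with hq₁
      have hstepq : nstep (m+2) (n+2) q q₁ := by
        refine ⟨0, j+1, m+1, j'+1, by omega, by omega, by omega, by omega,
          hqa, hqb, hqc, hqd, ?_, ?_, ?_⟩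
        · intro r s hr0 hrm hsj hsj' hnc
          rcases Nat.lt_or_ge r (m+1) with hrm' | hrm'
          · rcases Nat.eq_zero_or_pos r with rfl | hr1
            · apply hqtop s ?_ ?_ <;> omega
            · exact h1 r s (by omega) (by omega) (by omega) (by omega)
          · have : r = m+1 := by omega
            subst this
            apply hqbot s ?_ ?_ <;> omega
        · intro r s ⟨_, h2', h3', h4'⟩
          rw [hq₁]
          dsimp only
          rw [if_pos (by omega)]
        · intro r s hno
          rw [hq₁]
          dsimp only
          rw [if_neg (by omega)]
      -- invariants for q₁
      have h1₁ : ∀ r s, 1 ≤ r → r ≤ m → 1 ≤ s → s ≤ n → q₁ r s = DelN.N := by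
        intro r s a b c d
        rw [hq₁]; dsimp only
        split
        · rfl
        · exact h1 r s a b c d
      have hf₁ : ∀ s < n, q₁ 0 (s+1) = if j ≤ s ∧ s ≤ j' then DelN.N else f s := by
        intro s _
        rw [hq₁]; dsimp only
        by_cases hin : j ≤ s ∧ s ≤ j'
        · rw [if_pos (by omega), if_pos hin]
        · rw [if_neg (by omega), if_neg hin]
      have h2₁ : ((List.range n).map (fun s => q₁ 0 (s+1))).filter isNotN
          = (u ++ v).map embed := by
        have hlist : (List.range n).map (fun s => q₁ 0 (s+1))
            = t₁ ++ (List.replicate (t₂b.length + 2) DelN.N ++ t₃) := by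
          apply List.ext_getElem
          · simp [hlen']; omega
          · intro i hi1 hi2
            simp only [List.getElem_map, List.getElem_range]
            have hi : i < n := by simpa using hi1
            rw [hf₁ i hi]
            rcases Nat.lt_or_ge i j with hij | hij
            · rw [if_neg (by omega), List.getElem_append_left (by omega)]
              exact (getElem_range_map e_t₁ (by omega)).symm
            · rw [List.getElem_append_right (by omega)]
              rcases Nat.lt_or_ge (i - j) (t₂b.length + 2) with him | him
              · rw [if_pos (by omega), List.getElem_append_left (by
                  simpa using him)]
                simp
              · rw [if_neg (by omega), List.getElem_append_right (by simpa using him)]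
                rw [e_t₃ _ (by simp; omega)]
                congr 1
                simp
                omega
        rw [hlist, List.filter_append, hft₁, List.filter_append,
          List.filter_replicate_of_neg (by simp [isNotN]), ht₃]
        simp
      have h3₁ : ∀ s, 1 ≤ s → s ≤ n → q₁ (m+1) s = hrN (q₁ 0 s) := by
        intro s a b
        rw [hq₁]; dsimp only
        by_cases hin : j+1 ≤ s ∧ s ≤ j'+1
        · rw [if_pos (by omega), if_pos (by omega)]; rfl
        · rw [if_neg (by omega), if_neg (by omega)]
          exact h3 s a b
      obtain ⟨q', hrun, htb, hunch⟩ := ih q₁ h1₁ h2₁ h3₁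
      refine ⟨q', .head hstepq hrun, htb, ?_⟩
      intro r s hcond
      rw [hunch r s hcond, hq₁]
      dsimp only
      rcases hcond with ⟨hr0, hrm⟩ | rfl | rfl
      · split
        · rename_i hin
          exact (h1 r s (by omega) (by omega) (by omega) (by omega)).symm
        · rfl
      · rw [if_neg (by omega)]
      · rw [if_neg (by omega)]

end DWDN
namespace DWDN

lemma LR (m n : ℕ) : ∀ (w : List Del), DyckAC w → ∀ (q : ℕ → ℕ → DelN),
    (∀ r s, 1 ≤ r → r ≤ m → 1 ≤ s → s ≤ n → q r s = DelN.N) →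
    ((List.range m).map (fun r => q (r+1) 0)).filter isNotN = w.map embed →
    (∀ r, 1 ≤ r → r ≤ m → q r (n+1) = hcN (q r 0)) →
    ∃ q', Relation.ReflTransGen (nstep (m+2) (n+2)) q q' ∧
      (∀ r, 1 ≤ r → r ≤ m → q' r 0 = DelN.N ∧ q' r (n+1) = DelN.N) ∧
      (∀ r s, ((s ≠ 0 ∧ s ≠ n+1) ∨ r = 0 ∨ r = m+1) → q' r s = q r s) := by
  intro w hw
  induction hw using Relation.ReflTransGen.head_induction_on with
  | refl =>
      intro q h1 h2 h3
      refine ⟨q, .refl, ?_, fun _ _ _ => rfl⟩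
      intro r hr1 hr2
      have hN : q r 0 = DelN.N := by
        have hmem : q r 0 ∈ (List.range m).map (fun r => q (r+1) 0) :=
          List.mem_map.mpr ⟨r - 1, List.mem_range.mpr (by omega), by
            rw [show r - 1 + 1 = r by omega]⟩
        by_contra hne
        have hmem2 : q r 0 ∈ ((List.range m).map (fun r => q (r+1) 0)).filter isNotN :=
          List.mem_filter.mpr ⟨hmem, by cases hq : q r 0 <;> simp_all [isNotN]⟩
        rw [h2] at hmem2
        simp at hmem2
      exact ⟨hN, by rw [h3 r hr1 hr2, hN]; rfl⟩
  | @head w₀ w₁ hstep hrest ih =>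
      intro q h1 h2 h3
      obtain ⟨u, v, hw0, hw1⟩ := hstep
      subst hw0 hw1
      set f : ℕ → DelN := fun r => q (r+1) 0 with hf
      rw [show (u ++ [Del.a, Del.c] ++ v).map embed
            = u.map embed ++ (DelN.a :: (DelN.c :: v.map embed)) by
              simp
              exact ⟨rfl, rfl⟩] at h2
      obtain ⟨s₁, s₂, hts, hfs₁, hfs₂⟩ := filter_split isNotN _ _ _ h2
      obtain ⟨t₂a, rest, hs₂, hNa, hrest⟩ := filter_cons_decomp isNotN s₂ _ _ hfs₂
      obtain ⟨t₂b, t₃, hrest2, hNb, ht₃⟩ := filter_cons_decomp isNotN rest _ _ hrest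
      set t₁ : List DelN := s₁ ++ t₂a with ht₁
      have hft₁ : t₁.filter isNotN = u.map embed := by
        rw [ht₁, List.filter_append, hfs₁, List.filter_eq_nil_iff.mpr (by
          intro y hy; rw [hNa y hy]; simp), List.append_nil]
      have htdec : (List.range m).map f = t₁ ++ (DelN.a :: (t₂b ++ DelN.c :: t₃)) := by
        rw [hts, hs₂, hrest2, ht₁]; simp
      set j : ℕ := t₁.length with hj
      obtain ⟨e_t₁, e_rest, hlen⟩ := split_range_map f t₁ m _ htdec
      have hlen' : m = j + t₂b.length + 2 + t₃.length := by
        rw [hlen]; simp; omega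
      obtain ⟨e_a, e_rest2, -⟩ := split_range_map (fun k => f (j + k)) [DelN.a]
        (DelN.a :: (t₂b ++ DelN.c :: t₃)).length (t₂b ++ DelN.c :: t₃) (by rw [← e_rest]; rfl)
      have hfj : f j = DelN.a := by
        simp only [List.length_singleton, List.range_succ, List.range_zero, List.nil_append,
          List.map_cons, List.map_nil, List.cons.injEq, and_true] at e_a
        rw [show j = j + 0 by omega]
        exact e_a.symm
      simp only [List.length_singleton] at e_rest2
      obtain ⟨e_t₂b, e_rest3, -⟩ := split_range_map (fun k => f (j + (1 + k)))
        t₂b (t₂b ++ DelN.c :: t₃).length (DelN.c :: t₃) (by rw [← e_rest2])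
      have hmid : ∀ k < t₂b.length, f (j + 1 + k) = DelN.N := by
        intro k hk
        have hmem := mem_of_range_map e_t₂b hk
        have hval := eq_N_of_not_isNotN (x := f (j + (1 + k))) (by rw [hNb _ hmem]; simp)
        rw [show j + 1 + k = j + (1 + k) by omega]
        exact hval
      obtain ⟨e_b, e_rest4, -⟩ := split_range_map (fun k => f (j + (1 + (t₂b.length + k))))
        [DelN.c] (DelN.c :: t₃).length t₃ (by rw [← e_rest3]; rfl)
      set j' : ℕ := j + t₂b.length + 1 with hj'
      have hfj' : f j' = DelN.c := by
        simp only [List.length_singleton, List.range_succ, List.range_zero, List.nil_append,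
          List.map_cons, List.map_nil, List.cons.injEq, and_true] at e_b
        rw [show j' = j + (1 + (t₂b.length + 0)) by omega]
        exact e_b.symm
      simp only [List.length_singleton] at e_rest4
      have e_t₃ : ∀ (k : ℕ) (hk : k < t₃.length), t₃[k] = f (j' + 1 + k) := by
        intro k hk
        rw [getElem_range_map e_rest4 hk]
        congr 1
        omega
      have hj'n : j' < m := by omega
      have htop : ∀ r, j < r → r < j' → f r = DelN.N := by
        intro r hr1 hr2
        have := hmid (r - j - 1) (by omega)
        rwa [show j + 1 + (r - j - 1) = r by omega] at this
      have hqa : q (j + 1) 0 = DelN.a := hfj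
      have hqc : q (j' + 1) 0 = DelN.c := hfj'
      have hqleft : ∀ r, j + 1 < r → r < j' + 1 → q r 0 = DelN.N := by
        intro r hr1 hr2
        have := htop (r - 1) (by omega) (by omega)
        rw [show r = r - 1 + 1 by omega]
        exact this
      have hqb : q (j+1) (n+1) = DelN.b := by
        rw [h3 _ (by omega) (by omega), hqa]; rfl
      have hqd : q (j'+1) (n+1) = DelN.d := by
        rw [h3 _ (by omega) (by omega), hqc]; rfl
      have hqright : ∀ r, j + 1 < r → r < j' + 1 → q r (n+1) = DelN.N := by
        intro r hr1 hr2
        rw [h3 _ (by omega) (by omega), hqleft r hr1 hr2]; rfl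
      set q₁ : ℕ → ℕ → DelN := fun r s =>
        if j+1 ≤ r ∧ r ≤ j'+1 ∧ s ≤ n+1 then DelN.N else q r s with hq₁
      have hstepq : nstep (m+2) (n+2) q q₁ := by
        refine ⟨j+1, 0, j'+1, n+1, by omega, by omega, by omega, by omega,
          hqa, hqb, hqc, hqd, ?_, ?_, ?_⟩
        · intro r s hr0 hrm hsj hsj' hnc
          rcases Nat.lt_or_ge s (n+1) with hsn | hsn
          · rcases Nat.eq_zero_or_pos s with rfl | hs1
            · apply hqleft r ?_ ?_ <;> omega
            · exact h1 r s (by omega) (by omega) (by omega) (by omega)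
          · have : s = n+1 := by omega
            subst this
            apply hqright r ?_ ?_ <;> omega
        · intro r s ⟨h2', h3', _, h4'⟩
          rw [hq₁]
          dsimp only
          rw [if_pos (by omega)]
        · intro r s hno
          rw [hq₁]
          dsimp only
          rw [if_neg (by omega)]
      have h1₁ : ∀ r s, 1 ≤ r → r ≤ m → 1 ≤ s → s ≤ n → q₁ r s = DelN.N := by
        intro r s a b c d
        rw [hq₁]; dsimp only
        split
        · rfl
        · exact h1 r s a b c d
      have hf₁ : ∀ r < m, q₁ (r+1) 0 = if j ≤ r ∧ r ≤ j' then DelN.N else f r := by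
        intro r _
        rw [hq₁]; dsimp only
        by_cases hin : j ≤ r ∧ r ≤ j'
        · rw [if_pos (by omega), if_pos hin]
        · rw [if_neg (by omega), if_neg hin]
      have h2₁ : ((List.range m).map (fun r => q₁ (r+1) 0)).filter isNotN
          = (u ++ v).map embed := by
        have hlist : (List.range m).map (fun r => q₁ (r+1) 0)
            = t₁ ++ (List.replicate (t₂b.length + 2) DelN.N ++ t₃) := by
          apply List.ext_getElem
          · simp [hlen']; omega
          · intro i hi1 hi2
            simp only [List.getElem_map, List.getElem_range]
            have hi : i < m := by simpa using hi1
            rw [hf₁ i hi]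
            rcases Nat.lt_or_ge i j with hij | hij
            · rw [if_neg (by omega), List.getElem_append_left (by omega)]
              exact (getElem_range_map e_t₁ (by omega)).symm
            · rw [List.getElem_append_right (by omega)]
              rcases Nat.lt_or_ge (i - j) (t₂b.length + 2) with him | him
              · rw [if_pos (by omega), List.getElem_append_left (by
                  simpa using him)]
                simp
              · rw [if_neg (by omega), List.getElem_append_right (by simpa using him)]
                rw [e_t₃ _ (by simp; omega)]
                congr 1
                simp
                omega
        rw [hlist, List.filter_append, hft₁, List.filter_append,
          List.filter_replicate_of_neg (by simp [isNotN]), ht₃]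
        simp
      have h3₁ : ∀ r, 1 ≤ r → r ≤ m → q₁ r (n+1) = hcN (q₁ r 0) := by
        intro r a b
        rw [hq₁]; dsimp only
        by_cases hin : j+1 ≤ r ∧ r ≤ j'+1
        · rw [if_pos (by omega), if_pos (by omega)]; rfl
        · rw [if_neg (by omega), if_neg (by omega)]
          exact h3 r a b
      obtain ⟨q', hrun, htb, hunch⟩ := ih q₁ h1₁ h2₁ h3₁
      refine ⟨q', .head hstepq hrun, htb, ?_⟩
      intro r s hcond
      rw [hunch r s hcond, hq₁]
      dsimp only
      rcases hcond with ⟨hs0, hsn⟩ | rfl | rfl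
      · split
        · rename_i hin
          exact (h1 r s (by omega) (by omega) (by omega) (by omega)).symm
        · rfl
      · rw [if_neg (by omega)]
      · rw [if_neg (by omega)]

end DWDN
namespace DWDN

lemma DW_zero : ∀ {m n : ℕ} {p : ℕ → ℕ → Del}, DW m n p → m = 0 → n = 0 := by
  intro m n p h
  induction h with
  | empty _ => intro _; rfl
  | accrete => intro h0; omega
  | simplot m n p ds hm hn _ _ _ => intro h0; omega

lemma DW_ge2 : ∀ {m n : ℕ} {p : ℕ → ℕ → Del}, DW m n p → 1 ≤ m → 2 ≤ m ∧ 2 ≤ n := by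
  intro m n p h
  induction h with
  | empty _ => intro h0; omega
  | accrete => intro _; omega
  | simplot m n p ds hm hn hbounds huniq hblocks ih =>
      intro _
      obtain ⟨d, ⟨hds, hdom⟩, -⟩ := huniq 0 hm 0 hn
      obtain ⟨h2a, h2b⟩ := ih d hds (by omega)
      have hb := hbounds d hds
      obtain ⟨e1, e2, e3, e4⟩ := hdom
      constructor <;> omega

lemma DW_to_DN : ∀ {m n : ℕ} {p : ℕ → ℕ → Del}, DW m n p → 1 ≤ m → 1 ≤ n → DN m n p := by
  intro m n p h
  induction h with
  | empty _ => intro h0; omega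
  | accrete m n p q wr wc hp hwr hwc hlr hlc hq00 hq0n hqm0 hqmn htopr hbotr hleftc
      hrightc hinner ih =>
      intro _ _
      refine ⟨by omega, by omega, ?_⟩
      set Q₀ : ℕ → ℕ → DelN := fun r s => embed (q r s) with hQ₀
      obtain ⟨Q₁, hrun₁, hQ₁int, hQ₁off⟩ :
          ∃ Q₁, Relation.ReflTransGen (nstep (m+2) (n+2)) Q₀ Q₁ ∧
            (∀ r s, 1 ≤ r → r ≤ m → 1 ≤ s → s ≤ n → Q₁ r s = DelN.N) ∧
            (∀ r s, ¬(1 ≤ r ∧ r < 1 + m ∧ 1 ≤ s ∧ s < 1 + n) → Q₁ r s = Q₀ r s) := by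
        rcases Nat.eq_zero_or_pos m with rfl | hm
        · exact ⟨Q₀, .refl, fun r s a b _ _ => by omega, fun _ _ _ => rfl⟩
        · have hn2 := (DW_ge2 hp hm).2
          obtain ⟨-, -, qf, hrunf, hqfN⟩ := ih hm (by omega)
          obtain ⟨Q₁, hrun₁, hon, hoff⟩ := rtg_lift (m+2) (n+2) m n 1 1 (by omega) (by omega)
            hrunf Q₀ (by
              intro r hr s hs
              show embed (q (1+r) (1+s)) = embed (p r s)
              rw [show 1+r = r+1 by omega, show 1+s = s+1 by omega, hinner r hr s hs])
          refine ⟨Q₁, hrun₁, ?_, hoff⟩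
          intro r s a b c d
          have := hon (r-1) (by omega) (s-1) (by omega)
          rw [show 1 + (r-1) = r by omega, show 1 + (s-1) = s by omega] at this
          rw [this]
          exact hqfN _ (by omega) _ (by omega)
      have h2TB : ((List.range n).map (fun s => Q₁ 0 (s+1))).filter isNotN = wr.map embed := by
        have hlist : (List.range n).map (fun s => Q₁ 0 (s+1)) = wr.map embed := by
          apply List.ext_getElem
          · simp [hlr]
          · intro i hi1 hi2
            simp only [List.getElem_map, List.getElem_range]
            have hi : i < n := by simpa using hi1
            rw [hQ₁off 0 (i+1) (by omega)]
            show embed (q 0 (i+1)) = embed wr[i]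
            rw [htopr i hi]
            congr 1
            exact List.getD_eq_getElem _ _ (by omega)
        rw [hlist, filter_map_embed]
      have h3TB : ∀ s, 1 ≤ s → s ≤ n → Q₁ (m+1) s = hrN (Q₁ 0 s) := by
        intro s a b
        rw [hQ₁off (m+1) s (by omega), hQ₁off 0 s (by omega)]
        show embed (q (m+1) s) = hrN (embed (q 0 s))
        rw [hrN_embed]
        congr 1
        rw [show s = (s-1)+1 by omega, hbotr (s-1) (by omega), htopr (s-1) (by omega)]
      obtain ⟨Q₂, hrun₂, htb₂, hoff₂⟩ := TB m n wr hwr Q₁ hQ₁int h2TB h3TB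
      have h1LR : ∀ r s, 1 ≤ r → r ≤ m → 1 ≤ s → s ≤ n → Q₂ r s = DelN.N := by
        intro r s a b c d
        rw [hoff₂ r s (Or.inl ⟨by omega, by omega⟩)]
        exact hQ₁int r s a b c d
      have h2LR : ((List.range m).map (fun r => Q₂ (r+1) 0)).filter isNotN = wc.map embed := by
        have hlist : (List.range m).map (fun r => Q₂ (r+1) 0) = wc.map embed := by
          apply List.ext_getElem
          · simp [hlc]
          · intro i hi1 hi2
            simp only [List.getElem_map, List.getElem_range]
            have hi : i < m := by simpa using hi1
            rw [hoff₂ (i+1) 0 (Or.inr (Or.inl rfl)), hQ₁off (i+1) 0 (by omega)]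
            show embed (q (i+1) 0) = embed wc[i]
            rw [hleftc i hi]
            congr 1
            exact List.getD_eq_getElem _ _ (by omega)
        rw [hlist, filter_map_embed]
      have h3LR : ∀ r, 1 ≤ r → r ≤ m → Q₂ r (n+1) = hcN (Q₂ r 0) := by
        intro r a b
        rw [hoff₂ r (n+1) (Or.inr (Or.inr rfl)), hoff₂ r 0 (Or.inr (Or.inl rfl)),
          hQ₁off r (n+1) (by omega), hQ₁off r 0 (by omega)]
        show embed (q r (n+1)) = hcN (embed (q r 0))
        rw [hcN_embed]
        congr 1
        rw [show r = (r-1)+1 by omega, hrightc (r-1) (by omega), hleftc (r-1) (by omega)]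
      obtain ⟨Q₃, hrun₃, hlr₃, hoff₃⟩ := LR m n wc hwc Q₂ h1LR h2LR h3LR
      -- the final step
      have hc00 : Q₃ 0 0 = DelN.a := by
        rw [hoff₃ 0 0 (Or.inr (Or.inl rfl)), hoff₂ 0 0 (Or.inr (Or.inl rfl)),
          hQ₁off 0 0 (by omega)]
        show embed (q 0 0) = DelN.a
        rw [hq00]; rfl
      have hc0n : Q₃ 0 (n+1) = DelN.b := by
        rw [hoff₃ 0 (n+1) (Or.inr (Or.inl rfl)), hoff₂ 0 (n+1) (Or.inr (Or.inr rfl)),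
          hQ₁off 0 (n+1) (by omega)]
        show embed (q 0 (n+1)) = DelN.b
        rw [hq0n]; rfl
      have hcm0 : Q₃ (m+1) 0 = DelN.c := by
        rw [hoff₃ (m+1) 0 (Or.inr (Or.inr rfl)), hoff₂ (m+1) 0 (Or.inr (Or.inl rfl)),
          hQ₁off (m+1) 0 (by omega)]
        show embed (q (m+1) 0) = DelN.c
        rw [hqm0]; rfl
      have hcmn : Q₃ (m+1) (n+1) = DelN.d := by
        rw [hoff₃ (m+1) (n+1) (Or.inr (Or.inr rfl)), hoff₂ (m+1) (n+1) (Or.inr (Or.inr rfl)),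
          hQ₁off (m+1) (n+1) (by omega)]
        show embed (q (m+1) (n+1)) = DelN.d
        rw [hqmn]; rfl
      set Q₄ : ℕ → ℕ → DelN := fun r s =>
        if r ≤ m+1 ∧ s ≤ n+1 then DelN.N else Q₃ r s with hQ₄
      have hstep₄ : nstep (m+2) (n+2) Q₃ Q₄ := by
        refine ⟨0, 0, m+1, n+1, by omega, by omega, by omega, by omega,
          hc00, hc0n, hcm0, hcmn, ?_, ?_, ?_⟩
        · intro r s hr0 hrm hs0 hsn hnc
          rcases Nat.lt_or_ge 0 r with hr1 | hr1
          · rcases Nat.lt_or_ge r (m+1) with hr2 | hr2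
            · -- 1 ≤ r ≤ m
              rcases Nat.eq_zero_or_pos s with rfl | hs1
              · exact (hlr₃ r (by omega) (by omega)).1
              · rcases Nat.lt_or_ge s (n+1) with hs2 | hs2
                · rw [hoff₃ r s (Or.inl ⟨by omega, by omega⟩)]
                  exact h1LR r s (by omega) (by omega) (by omega) (by omega)
                · have : s = n+1 := by omega
                  subst this
                  exact (hlr₃ r (by omega) (by omega)).2
            · -- r = m+1
              have : r = m+1 := by omega
              subst this
              have hs : 1 ≤ s ∧ s ≤ n := by omega
              rw [hoff₃ _ s (Or.inr (Or.inr rfl))]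
              exact (htb₂ s hs.1 hs.2).2
          · -- r = 0
            have : r = 0 := by omega
            subst this
            have hs : 1 ≤ s ∧ s ≤ n := by omega
            rw [hoff₃ 0 s (Or.inr (Or.inl rfl))]
            exact (htb₂ s hs.1 hs.2).1
        · intro r s ⟨_, b, _, d⟩
          rw [hQ₄]; dsimp only
          rw [if_pos ⟨b, d⟩]
        · intro r s hno
          rw [hQ₄]; dsimp only
          rw [if_neg (by omega)]
      refine ⟨Q₄, (hrun₁.trans (hrun₂.trans (hrun₃.trans (.single hstep₄)))), ?_⟩
      intro r hr s hs
      rw [hQ₄]; dsimp only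
      rw [if_pos ⟨by omega, by omega⟩]
  | simplot m n p ds hm hn hbounds huniq hblocks ih =>
      intro _ _
      refine ⟨hm, hn, ?_⟩
      have hfin : ds.Finite := by
        apply Set.Finite.subset
          (((Set.finite_Iio m).prod (((Set.finite_Iio n)).prod
            ((Set.finite_Iio m).prod (Set.finite_Iio n)))))
        intro d hd
        have hb := hbounds d hd
        exact ⟨by simp [Set.mem_Iio]; omega, by simp [Set.mem_Iio]; omega,
          by simp [Set.mem_Iio]; omega, by simp [Set.mem_Iio]; omega⟩
      set l : List (ℕ × ℕ × ℕ × ℕ) := hfin.toFinset.toList with hl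
      have hmeml : ∀ d, d ∈ l ↔ d ∈ ds := by
        intro d
        rw [hl, Finset.mem_toList, Set.Finite.mem_toFinset]
      have hnodup : l.Nodup := Finset.nodup_toList _
      have key : ∀ (l' : List (ℕ × ℕ × ℕ × ℕ)), l'.Nodup → (∀ d ∈ l', d ∈ ds) →
          ∀ Q : ℕ → ℕ → DelN, (∀ d ∈ l', ∀ r s, inDom d r s → Q r s = embed (p r s)) →
          ∃ Q', Relation.ReflTransGen (nstep m n) Q Q' ∧
            (∀ d ∈ l', ∀ r s, inDom d r s → Q' r s = DelN.N) ∧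
            (∀ r s, (∀ d ∈ l', ¬ inDom d r s) → Q' r s = Q r s) := by
        intro l'
        induction l' with
        | nil =>
            intro _ _ Q _
            exact ⟨Q, .refl, by simp, fun _ _ _ => rfl⟩
        | cons d l'' ihl =>
            intro hnd hmem Q hQ
            have hd : d ∈ ds := hmem d List.mem_cons_self
            have hb := hbounds d hd
            obtain ⟨-, -, qf, hrunf, hqfN⟩ :=
              ih d hd (by omega) (by omega)
            obtain ⟨Q₁, hrun₁, hon₁, hoff₁⟩ := rtg_lift m n (d.2.2.1 - d.1 + 1)
              (d.2.2.2 - d.2.1 + 1) d.1 d.2.1 (by omega) (by omega) hrunf Q (by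
                intro r hr s hs
                exact hQ d List.mem_cons_self _ _
                  ⟨by omega, by omega, by omega, by omega⟩)
            have hdisj : ∀ d' ∈ l'', ∀ r s, inDom d' r s → ¬ inDom d r s := by
              intro d' hd' r s hdom' hdom
              have hd's : d' ∈ ds := hmem d' (List.mem_cons_of_mem _ hd')
              have hb' := hbounds d' hd's
              obtain ⟨e1, e2, e3, e4⟩ := id hdom'
              obtain ⟨du, -, huni⟩ := huniq r (by omega) s (by omega)
              have hdd : d = d' := by
                rw [huni d ⟨hd, hdom⟩, huni d' ⟨hd's, hdom'⟩]
              have : d ∉ l'' := (List.nodup_cons.mp hnd).1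
              exact this (hdd ▸ hd')
            have hInDom_iff : ∀ r s, inDom d r s ↔
                (d.1 ≤ r ∧ r < d.1 + (d.2.2.1 - d.1 + 1) ∧
                 d.2.1 ≤ s ∧ s < d.2.1 + (d.2.2.2 - d.2.1 + 1)) := by
              intro r s
              unfold inDom
              omega
            obtain ⟨Q', hrun', hN', hoff'⟩ := ihl (List.nodup_cons.mp hnd).2
              (fun d' h' => hmem d' (List.mem_cons_of_mem _ h')) Q₁ (by
                intro d' h' r s hdom
                rw [hoff₁ r s (by rw [← hInDom_iff]; exact hdisj d' h' r s hdom)]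
                exact hQ d' (List.mem_cons_of_mem _ h') r s hdom)
            refine ⟨Q', hrun₁.trans hrun', ?_, ?_⟩
            · intro d'' hd'' r s hdom
              rcases List.mem_cons.mp hd'' with heq | hd''
              · have hdom2 : inDom d r s := heq ▸ hdom
                rw [hoff' r s (fun d' h' hc => hdisj d' h' r s hc hdom2)]
                obtain ⟨e1, e2, e3, e4⟩ := hdom2
                have := hon₁ (r - d.1) (by omega) (s - d.2.1) (by omega)
                rw [show d.1 + (r - d.1) = r by omega,
                  show d.2.1 + (s - d.2.1) = s by omega] at this
                rw [this]
                exact hqfN _ (by omega) _ (by omega)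
              · exact hN' d'' hd'' r s hdom
            · intro r s hnone
              rw [hoff' r s (fun d' h' => hnone d' (List.mem_cons_of_mem _ h')),
                hoff₁ r s (by
                  rw [← hInDom_iff]
                  exact hnone d List.mem_cons_self)]
      obtain ⟨Q', hrun, hN, -⟩ := key l hnodup (fun d hd => (hmeml d).mp hd)
        (fun r s => embed (p r s)) (fun _ _ _ _ _ => rfl)
      refine ⟨Q', hrun, ?_⟩
      intro r hr s hs
      obtain ⟨du, ⟨hdu, hdom⟩, -⟩ := huniq r hr s hs
      exact hN du ((hmeml du).mpr hdu) r s hdom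

end DWDN
namespace DWDN

def pX : ℕ → ℕ → Del := fun r _ => if r = 0 then Del.a else Del.c
def pY : ℕ → ℕ → Del := fun r _ => if r = 0 then Del.b else Del.d

def Bad (m n : ℕ) (p : ℕ → ℕ → Del) : Prop :=
  (m = 2 ∧ n = 4 ∧ ∀ r < 2, ∀ s < 4, p r s = pN r s) ∨
  (m = 2 ∧ n = 2 ∧ ((∀ r < 2, ∀ s < 2, p r s = pX r s) ∨ (∀ r < 2, ∀ s < 2, p r s = pY r s)))

lemma pN_eq_pX {r s : ℕ} (hs : s < 2) : pN r s = pX r s := by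
  by_cases hr : r = 0 <;> simp [pN, pX, hr, show s ≤ 1 by omega]

lemma noBad : ∀ {m n : ℕ} {p : ℕ → ℕ → Del}, DW m n p → ¬ Bad m n p := by
  intro m n p h
  induction h with
  | empty _ =>
      intro hb
      rcases hb with ⟨h2, -⟩ | ⟨h2, -⟩ <;> omega
  | accrete m n p q wr wc hp hwr hwc hlr hlc hq00 hq0n hqm0 hqmn htopr hbotr hleftc
      hrightc hinner ih =>
      intro hb
      rcases hb with ⟨hm, hn, hpp⟩ | ⟨hm, hn, hxy⟩
      · have := DW_zero hp (by omega)
        omega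
      · have hn0 : n = 0 := by omega
        rw [hn0] at hq0n
        rcases hxy with hX | hY
        · have h1 := hX 0 (by omega) 1 (by omega)
          rw [hq0n] at h1
          simp [pX] at h1
        · have h1 := hY 0 (by omega) 0 (by omega)
          rw [hq00] at h1
          simp [pY] at h1
  | simplot m n p ds hm hn hbounds huniq hblocks ih =>
      intro hb
      obtain ⟨d0, ⟨hd0, hdom0⟩, -⟩ := huniq 0 hm 0 hn
      have hb0 := hbounds d0 hd0
      have hge := DW_ge2 (hblocks d0 hd0) (by omega)
      obtain ⟨e1, e2, e3, e4⟩ := id hdom0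
      rcases hb with ⟨hm2, hn4, hpp⟩ | ⟨hm2, hn2, hxy⟩
      · have hd01 : d0.1 = 0 := by omega
        have hd0c : d0.2.1 = 0 := by omega
        have hd0r : d0.2.2.1 = 1 := by omega
        have hcase : d0.2.2.2 = 1 ∨ d0.2.2.2 = 2 ∨ d0.2.2.2 = 3 := by omega
        rcases hcase with hw | hw | hw
        · apply ih d0 hd0
          right
          refine ⟨by omega, by omega, Or.inl ?_⟩
          intro r hr s hs
          show p (d0.1 + r) (d0.2.1 + s) = pX r s
          rw [hd01, hd0c, Nat.zero_add, Nat.zero_add, hpp r (by omega) s (by omega)]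
          exact pN_eq_pX hs
        · obtain ⟨d1, ⟨hd1, hdom1⟩, -⟩ := huniq 0 (by omega) 3 (by omega)
          have hb1 := hbounds d1 hd1
          have hge1 := DW_ge2 (hblocks d1 hd1) (by omega)
          obtain ⟨f1, f2, f3, f4⟩ := id hdom1
          obtain ⟨du, -, huni⟩ := huniq 0 (by omega) 2 (by omega)
          have hdd : d0 = d1 := by
            rw [huni d0 ⟨hd0, ⟨by omega, by omega, by omega, by omega⟩⟩,
              huni d1 ⟨hd1, ⟨by omega, by omega, by omega, by omega⟩⟩]
          rw [hdd] at hw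
          omega
        · apply ih d0 hd0
          left
          refine ⟨by omega, by omega, ?_⟩
          intro r hr s hs
          show p (d0.1 + r) (d0.2.1 + s) = pN r s
          rw [hd01, hd0c, Nat.zero_add, Nat.zero_add]
          exact hpp r hr s hs
      · have hd01 : d0.1 = 0 := by omega
        have hd0c : d0.2.1 = 0 := by omega
        have hd0r : d0.2.2.1 = 1 := by omega
        have hd0cc : d0.2.2.2 = 1 := by omega
        apply ih d0 hd0
        right
        refine ⟨by omega, by omega, ?_⟩
        rcases hxy with hX | hY
        · left
          intro r hr s hs
          show p (d0.1 + r) (d0.2.1 + s) = pX r s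
          rw [hd01, hd0c, Nat.zero_add, Nat.zero_add]
          exact hX r hr s hs
        · right
          intro r hr s hs
          show p (d0.1 + r) (d0.2.1 + s) = pY r s
          rw [hd01, hd0c, Nat.zero_add, Nat.zero_add]
          exact hY r hr s hs

lemma DN_pN : DN 2 4 pN := by
  refine ⟨by omega, by omega, ?_⟩
  set P0 : ℕ → ℕ → DelN := fun r s => embed (pN r s) with hP0
  set P1 : ℕ → ℕ → DelN := fun r s =>
    if r ≤ 1 ∧ 1 ≤ s ∧ s ≤ 2 then DelN.N else P0 r s with hP1
  set P2 : ℕ → ℕ → DelN := fun r s =>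
    if r ≤ 1 ∧ s ≤ 3 then DelN.N else P1 r s with hP2
  have step1 : nstep 2 4 P0 P1 := by
    refine ⟨0, 1, 1, 2, by omega, by omega, by omega, by omega, ?_, ?_, ?_, ?_, ?_, ?_, ?_⟩
    · show embed (pN 0 1) = DelN.a
      simp [pN, embed]
    · show embed (pN 0 2) = DelN.b
      simp [pN, embed]
    · show embed (pN 1 1) = DelN.c
      simp [pN, embed]
    · show embed (pN 1 2) = DelN.d
      simp [pN, embed]
    · intro r s h1 h2 h3 h4 h5
      exact absurd ⟨by omega, by omega⟩ h5
    · intro r s hin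
      rw [hP1]; dsimp only
      rw [if_pos (by omega)]
    · intro r s hno
      rw [hP1]; dsimp only
      rw [if_neg (by omega)]
  have step2 : nstep 2 4 P1 P2 := by
    refine ⟨0, 0, 1, 3, by omega, by omega, by omega, by omega, ?_, ?_, ?_, ?_, ?_, ?_, ?_⟩
    · rw [hP1]; dsimp only
      rw [if_neg (by omega)]
      show embed (pN 0 0) = DelN.a
      simp [pN, embed]
    · rw [hP1]; dsimp only
      rw [if_neg (by omega)]
      show embed (pN 0 3) = DelN.b
      simp [pN, embed]
    · rw [hP1]; dsimp only
      rw [if_neg (by omega)]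
      show embed (pN 1 0) = DelN.c
      simp [pN, embed]
    · rw [hP1]; dsimp only
      rw [if_neg (by omega)]
      show embed (pN 1 3) = DelN.d
      simp [pN, embed]
    · intro r s h1 h2 h3 h4 h5
      rw [hP1]; dsimp only
      rw [if_pos (by omega)]
    · intro r s hin
      rw [hP2]; dsimp only
      rw [if_pos (by omega)]
    · intro r s hno
      rw [hP2]; dsimp only
      rw [if_neg (by omega)]
  refine ⟨P2, Relation.ReflTransGen.head step1 (Relation.ReflTransGen.single step2), ?_⟩
  intro r hr s hs
  rw [hP2]; dsimp only
  rw [if_pos (by omega)]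

end DWDN

/-- Every (nonempty) well-nested Dyck picture is neutralizable, and the
inclusion DW₁ ⊆ DN₁ is strict, witnessed by the 2×4 picture with rows
`aabb`, `ccdd`. -/
theorem DW_strictSubset_DN :
    (∀ (m n : ℕ) (p : ℕ → ℕ → Del), DW m n p → 1 ≤ m → 1 ≤ n → DN m n p) ∧
    DN 2 4 pN ∧ ¬ DW 2 4 pN := by
  refine ⟨fun m n p h hm hn => DWDN.DW_to_DN h hm hn, DWDN.DN_pN, fun h => ?_⟩
  exact DWDN.noBad h (Or.inl ⟨rfl, rfl, fun r _ s _ => rfl⟩)
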